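/- Let F be submodular with F(∅)=0. Then for all w ∈ ℝ^p, max over s ∈ B(F) of w^T s equals f(w); and if some coordinate w_j < 0, then sup over s ∈ P(F) of w^T s = +∞. -/

import Mathlib

/-- The Lovász extension of a set-function `F`, defined via a nondecreasing
ordering `σ = Tuple.sort w` of the components of `w`. -/
noncomputable def lovasz {p : ℕ} (F : Finset (Fin p) → ℝ) (w : Fin p → ℝ) : ℝ :=
  ∑ k : Fin p, w (Tuple.sort w k) *
    (F ((Finset.Ici k).image (Tuple.sort w)) - F ((Finset.Ioi k).image (Tuple.sort w)))

def Submodular {p : ℕ} (F : Finset (Fin p) → ℝ) : Prop :=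
  ∀ A B : Finset (Fin p), F (A ∪ B) + F (A ∩ B) ≤ F A + F B

def MemP {p : ℕ} (F : Finset (Fin p) → ℝ) (s : Fin p → ℝ) : Prop :=
  ∀ A : Finset (Fin p), ∑ k ∈ A, s k ≤ F A

def MemB {p : ℕ} (F : Finset (Fin p) → ℝ) (s : Fin p → ℝ) : Prop :=
  MemP F s ∧ ∑ k, s k = F Finset.univ

namespace SupportFnAux

open Finset

variable {p : ℕ}

/-- `Bset σ n` is the image under `σ` of the indices `≥ n`. -/
def Bset (σ : Equiv.Perm (Fin p)) (n : ℕ) : Finset (Fin p) :=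
  (Finset.univ.filter fun j : Fin p => n ≤ j.val).image σ

lemma mem_Bset {σ : Equiv.Perm (Fin p)} {n : ℕ} {i : Fin p} :
    i ∈ Bset σ n ↔ n ≤ (σ.symm i : Fin p).val := by
  constructor
  · simp only [Bset, mem_image, mem_filter, mem_univ, true_and]
    rintro ⟨j, hj, rfl⟩; simpa using hj
  · intro h
    simp only [Bset, mem_image, mem_filter, mem_univ, true_and]
    exact ⟨σ.symm i, h, by simp⟩

lemma Bset_zero (σ : Equiv.Perm (Fin p)) : Bset σ 0 = univ := by
  ext i; simp [mem_Bset]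

lemma Bset_top (σ : Equiv.Perm (Fin p)) : Bset σ p = ∅ := by
  ext i
  simp only [mem_Bset, notMem_empty, iff_false, not_le]
  exact (σ.symm i).isLt

lemma Bset_succ_subset (σ : Equiv.Perm (Fin p)) (n : ℕ) : Bset σ (n + 1) ⊆ Bset σ n := by
  intro i hi
  rw [mem_Bset] at *
  omega

lemma not_mem_Bset_succ (σ : Equiv.Perm (Fin p)) {n : ℕ} (hn : n < p) :
    σ ⟨n, hn⟩ ∉ Bset σ (n + 1) := by
  simp [mem_Bset]

lemma Bset_eq_insert (σ : Equiv.Perm (Fin p)) {n : ℕ} (hn : n < p) :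
    Bset σ n = insert (σ ⟨n, hn⟩) (Bset σ (n + 1)) := by
  ext i
  simp only [mem_Bset, mem_insert]
  constructor
  · intro h
    rcases eq_or_lt_of_le h with h' | h'
    · left
      have : σ.symm i = ⟨n, hn⟩ := Fin.ext h'.symm
      calc i = σ (σ.symm i) := by simp
        _ = σ ⟨n, hn⟩ := by rw [this]
    · right; omega
  · rintro (rfl | h)
    · simp
    · omega

lemma image_Ici (σ : Equiv.Perm (Fin p)) (k : Fin p) :
    (Finset.Ici k).image σ = Bset σ k.val := by
  unfold Bset
  congr 1
  ext j
  simp only [mem_Ici, mem_filter, mem_univ, true_and, Fin.le_def]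

lemma image_Ioi (σ : Equiv.Perm (Fin p)) (k : Fin p) :
    (Finset.Ioi k).image σ = Bset σ (k.val + 1) := by
  unfold Bset
  congr 1
  ext j
  simp only [mem_Ioi, mem_filter, mem_univ, true_and, Fin.lt_def]
  omega

lemma lovasz_eq (F : Finset (Fin p) → ℝ) (w : Fin p → ℝ) :
    lovasz F w = ∑ k : Fin p, w (Tuple.sort w k) *
      (F (Bset (Tuple.sort w) k.val) - F (Bset (Tuple.sort w) (k.val + 1))) := by
  unfold lovasz
  refine Finset.sum_congr rfl fun k _ => ?_
  rw [image_Ici, image_Ioi]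

/-- The greedy solution. -/
noncomputable def greedy (F : Finset (Fin p) → ℝ) (σ : Equiv.Perm (Fin p)) (i : Fin p) : ℝ :=
  F (Bset σ (σ.symm i).val) - F (Bset σ ((σ.symm i).val + 1))

lemma greedy_apply (F : Finset (Fin p) → ℝ) (σ : Equiv.Perm (Fin p)) (k : Fin p) :
    greedy F σ (σ k) = F (Bset σ k.val) - F (Bset σ (k.val + 1)) := by
  simp [greedy]

lemma sum_greedy (F : Finset (Fin p) → ℝ) (h0 : F ∅ = 0) (σ : Equiv.Perm (Fin p)) :
    ∑ i, greedy F σ i = F univ := by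
  rw [← Equiv.sum_comp σ (greedy F σ)]
  have : ∀ k : Fin p, greedy F σ (σ k) =
      (fun n : ℕ => F (Bset σ n) - F (Bset σ (n + 1))) k.val := fun k => greedy_apply F σ k
  rw [Finset.sum_congr rfl fun k _ => this k,
    Fin.sum_univ_eq_sum_range (fun n : ℕ => F (Bset σ n) - F (Bset σ (n + 1))) p,
    Finset.sum_range_sub' (fun n => F (Bset σ n)) p, Bset_zero, Bset_top, h0, sub_zero]

lemma greedy_feasible_aux (F : Finset (Fin p) → ℝ) (hF : Submodular F) (h0 : F ∅ = 0)
    (σ : Equiv.Perm (Fin p)) :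
    ∀ m, m ≤ p → ∀ A : Finset (Fin p),
      ∑ i ∈ A ∩ Bset σ (p - m), greedy F σ i ≤ F (A ∩ Bset σ (p - m)) := by
  intro m
  induction m with
  | zero => intro _ A; simp [Bset_top, h0]
  | succ m ih =>
    intro hm A
    have hm' : m ≤ p := by omega
    set n := p - (m + 1) with hn
    have hnp : n < p := by omega
    have hpm : p - m = n + 1 := by omega
    have ihA := ih hm' A
    rw [hpm] at ihA
    set e := σ ⟨n, hnp⟩ with he
    by_cases hA : e ∈ A
    · have hins : A ∩ Bset σ n = insert e (A ∩ Bset σ (n + 1)) := by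
        rw [Bset_eq_insert σ hnp, ← he]
        ext i
        simp only [mem_inter, mem_insert]
        constructor
        · rintro ⟨hiA, h | h⟩
          · exact Or.inl h
          · exact Or.inr ⟨hiA, h⟩
        · rintro (h | ⟨h1, h2⟩)
          · exact ⟨by rw [h]; exact hA, Or.inl h⟩
          · exact ⟨h1, Or.inr h2⟩
      have hnotmem : e ∉ A ∩ Bset σ (n + 1) := fun h =>
        not_mem_Bset_succ σ hnp (mem_inter.mp h).2
      rw [hins, Finset.sum_insert hnotmem]
      have hge : greedy F σ e = F (Bset σ n) - F (Bset σ (n + 1)) := greedy_apply F σ ⟨n, hnp⟩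
      have hu : (A ∩ Bset σ n) ∪ Bset σ (n + 1) = Bset σ n := by
        apply Finset.Subset.antisymm
        · exact Finset.union_subset (Finset.inter_subset_right) (Bset_succ_subset σ n)
        · intro i hi
          rw [Bset_eq_insert σ hnp, ← he] at hi
          rcases Finset.mem_insert.mp hi with rfl | hi'
          · exact Finset.mem_union_left _ (by rw [hins]; exact Finset.mem_insert_self _ _)
          · exact Finset.mem_union_right _ hi'
      have hi2 : (A ∩ Bset σ n) ∩ Bset σ (n + 1) = A ∩ Bset σ (n + 1) := by
        rw [Finset.inter_assoc, Finset.inter_eq_right.mpr (Bset_succ_subset σ n)]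
      have hsub := hF (A ∩ Bset σ n) (Bset σ (n + 1))
      rw [hu, hi2, hins] at hsub
      linarith
    · have : A ∩ Bset σ n = A ∩ Bset σ (n + 1) := by
        rw [Bset_eq_insert σ hnp, ← he, Finset.inter_insert_of_notMem hA]
      rw [this]
      exact ihA

lemma greedy_memB (F : Finset (Fin p) → ℝ) (hF : Submodular F) (h0 : F ∅ = 0)
    (σ : Equiv.Perm (Fin p)) : MemB F (greedy F σ) := by
  constructor
  · intro A
    have := greedy_feasible_aux F hF h0 σ p le_rfl A
    rwa [Nat.sub_self, Bset_zero, Finset.inter_univ] at this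
  · exact sum_greedy F h0 σ

lemma greedy_value (F : Finset (Fin p) → ℝ) (w : Fin p → ℝ) :
    ∑ i, w i * greedy F (Tuple.sort w) i = lovasz F w := by
  set σ := Tuple.sort w
  rw [lovasz_eq, ← Equiv.sum_comp σ (fun i => w i * greedy F σ i)]
  exact Finset.sum_congr rfl fun k _ => by rw [greedy_apply]

lemma abel_sum (a D : ℕ → ℝ) (m : ℕ) :
    ∑ k ∈ Finset.range (m + 1), a k * (D k - D (k + 1)) =
      a 0 * D 0 - a m * D (m + 1) + ∑ j ∈ Finset.range m, (a (j + 1) - a j) * D (j + 1) := by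
  induction m with
  | zero => simp; ring
  | succ m ih =>
    rw [Finset.sum_range_succ, ih, Finset.sum_range_succ]
    ring

lemma le_lovasz (F : Finset (Fin p) → ℝ) (h0 : F ∅ = 0)
    (w : Fin p → ℝ) (s : Fin p → ℝ) (hs : MemB F s) :
    ∑ i, w i * s i ≤ lovasz F w := by
  set σ := Tuple.sort w with hσ
  have hmono : Monotone (w ∘ σ) := Tuple.monotone_sort w
  set T : ℕ → ℝ := fun n => ∑ i ∈ Bset σ n, s i with hT
  set D : ℕ → ℝ := fun n => F (Bset σ n) - T n with hD
  have hD0 : D 0 = 0 := by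
    simp only [hD, hT, Bset_zero]
    rw [hs.2]; ring
  have hDp : D p = 0 := by simp [hD, hT, Bset_top, h0]
  have hDnn : ∀ n, 0 ≤ D n := fun n => sub_nonneg.mpr (hs.1 _)
  have hsσ : ∀ k : Fin p, s (σ k) = T k.val - T (k.val + 1) := by
    intro k
    have h1 : Bset σ k.val = insert (σ k) (Bset σ (k.val + 1)) := by
      have := Bset_eq_insert σ k.isLt
      simpa using this
    have h2 : σ k ∉ Bset σ (k.val + 1) := by
      have := not_mem_Bset_succ σ k.isLt
      simpa using this
    simp only [hT, h1, Finset.sum_insert h2]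
    ring
  set a : ℕ → ℝ := fun n => if h : n < p then w (σ ⟨n, h⟩) else 0 with ha
  have haval : ∀ k : Fin p, a k.val = w (σ k) := by
    intro k
    simp [ha, k.isLt]
  have key : lovasz F w - ∑ i, w i * s i =
      ∑ n ∈ Finset.range p, a n * (D n - D (n + 1)) := by
    rw [lovasz_eq, ← Equiv.sum_comp σ (fun i => w i * s i)]
    rw [← Finset.sum_sub_distrib]
    rw [← Fin.sum_univ_eq_sum_range (fun n => a n * (D n - D (n + 1))) p]
    refine Finset.sum_congr rfl fun k _ => ?_
    simp only [hsσ k, haval k, hD]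
    ring
  have hnonneg : 0 ≤ ∑ n ∈ Finset.range p, a n * (D n - D (n + 1)) := by
    rcases Nat.eq_zero_or_pos p with hp | hp
    · subst hp; simp
    · obtain ⟨m, rfl⟩ : ∃ m, p = m + 1 := ⟨p - 1, by omega⟩
      rw [abel_sum, hD0, hDp]
      have h1 : 0 ≤ ∑ j ∈ Finset.range m, (a (j + 1) - a j) * D (j + 1) := by
        refine Finset.sum_nonneg fun j hj => ?_
        have hjm : j < m := Finset.mem_range.mp hj
        have hj1 : j + 1 < m + 1 := by omega
        have hj0 : j < m + 1 := by omega
        have : a j ≤ a (j + 1) := by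
          simp only [ha, dif_pos hj1, dif_pos hj0]
          exact hmono (show (⟨j, hj0⟩ : Fin (m+1)) ≤ ⟨j + 1, hj1⟩ by
            simp [Fin.le_def])
        exact mul_nonneg (by linarith) (hDnn _)
      simp only [mul_zero, sub_zero]
      linarith
  linarith

end SupportFnAux

open SupportFnAux in
/-- Support functions of the base and submodular polyhedra: the maximum of `wᵀ s`
over `B(F)` is the Lovász extension `f(w)`; and if some coordinate of `w` is
negative, `wᵀ s` is unbounded above over `P(F)`. -/
theorem support_functions {p : ℕ} (F : Finset (Fin p) → ℝ)
    (hF : Submodular F) (h0 : F ∅ = 0) (w : Fin p → ℝ) :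
    IsGreatest {x : ℝ | ∃ s : Fin p → ℝ, MemB F s ∧ x = ∑ i, w i * s i}
        (lovasz F w) ∧
      ((∃ j, w j < 0) →
        ¬ BddAbove {x : ℝ | ∃ s : Fin p → ℝ, MemP F s ∧ x = ∑ i, w i * s i}) := by
  constructor
  · constructor
    · exact ⟨greedy F (Tuple.sort w), greedy_memB F hF h0 _, (greedy_value F w).symm⟩
    · rintro x ⟨s, hs, rfl⟩
      exact le_lovasz F h0 w s hs
  · rintro ⟨j, hj⟩ ⟨M, hM⟩
    set s0 := greedy F (Tuple.sort w) with hs0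
    have hs0P : MemP F s0 := (greedy_memB F hF h0 _).1
    set b := ∑ i, w i * s0 i with hb
    have hbM : b ≤ M := hM ⟨s0, hs0P, rfl⟩
    have hwj : 0 < -w j := by linarith
    obtain ⟨t, ht0, htgt⟩ : ∃ t : ℝ, 0 ≤ t ∧ M - b < t * (-w j) := by
      refine ⟨(M - b) / (-w j) + 1, ?_, ?_⟩
      · have : 0 ≤ (M - b) / (-w j) := div_nonneg (by linarith) (le_of_lt hwj)
        linarith
      · have h1 : (M - b) / (-w j) * (-w j) = M - b := div_mul_cancel₀ _ (ne_of_gt hwj)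
        have h2 := mul_lt_mul_of_pos_right (lt_add_one ((M - b) / (-w j))) hwj
        linarith
    set s' : Fin p → ℝ := fun i => if i = j then s0 j - t else s0 i with hs'
    have hs'le : ∀ i, s' i ≤ s0 i := by
      intro i
      by_cases h : i = j
      · show (if i = j then s0 j - t else s0 i) ≤ s0 i
        rw [if_pos h, h]
        linarith
      · show (if i = j then s0 j - t else s0 i) ≤ s0 i
        rw [if_neg h]
    have hs'P : MemP F s' := fun A =>
      le_trans (Finset.sum_le_sum fun i _ => hs'le i) (hs0P A)
    have hval : ∑ i, w i * s' i = b - w j * t := by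
      have hterm : ∀ i : Fin p, w i * s' i = w i * s0 i - (if i = j then w j * t else 0) := by
        intro i
        by_cases h : i = j
        · show w i * (if i = j then s0 j - t else s0 i) =
            w i * s0 i - (if i = j then w j * t else 0)
          rw [if_pos h, if_pos h, h]
          ring
        · show w i * (if i = j then s0 j - t else s0 i) = _
          rw [if_neg h, if_neg h]
          ring
      rw [Finset.sum_congr rfl fun i _ => hterm i, Finset.sum_sub_distrib,
        Finset.sum_ite_eq' Finset.univ j (fun _ => w j * t)]
      rw [if_pos (Finset.mem_univ j), hb]
    have hle : ∑ i, w i * s' i ≤ M := hM ⟨s', hs'P, rfl⟩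
    rw [hval] at hle
    nlinarith [htgt]
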